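/- Let G be a directed graph on a finite set of operations containing edges for program order, write-to order, and closed under Rule C (for every triple w, r, w' on the same variable with w = D(r), w' ≠ w, and a path from w' to r, the edge w' → w is in G). If G is acyclic, then there exists a legal schedule of the operations that respects program order and write-to order (i.e., the trace satisfies PRAM consistency for the distinguished process). -/

import Mathlib

/-- Abstract data of a read/write trace (restricted to the operations visible to the
distinguished process `p₀ = 0`, i.e. all writes plus `p₀`'s reads): operation type,
variable, issuing process, program order, and the dictating-write map `D` (well defined
since writes assign unique values per variable). -/
structure PramTrace (ι : Type) where
  isRead : ι → Bool
  var : ι → ℕ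
  proc : ι → ℕ
  po : ι → ι → Prop
  D : ι → ι
  po_trans : Transitive po
  po_irrefl : Irreflexive po
  po_proc : ∀ a b, po a b → proc a = proc b
  po_total : ∀ a b, proc a = proc b → a ≠ b → po a b ∨ po b a
  reads_p0 : ∀ r, isRead r = true → proc r = 0
  D_write : ∀ r, isRead r = true → isRead (D r) = false
  D_var : ∀ r, isRead r = true → var (D r) = var r

variable {ι : Type} [Fintype ι]

/-- `σ` is (the numbering of) a legal schedule of the operations respecting program
order and write-to order: it is injective, respects `≺_PO` and `≺_WR`, and every read
reads the latest preceding write on its variable (i.e. its dictating write precedes it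
with no other write on the same variable in between). -/
def PramTrace.Legal (T : PramTrace ι) (σ : ι → ℕ) : Prop :=
  Function.Injective σ ∧
  (∀ a b, T.po a b → σ a < σ b) ∧
  (∀ r, T.isRead r = true → σ (T.D r) < σ r) ∧
  (∀ r w', T.isRead r = true → T.isRead w' = false → T.var w' = T.var r →
    w' ≠ T.D r → ¬ (σ (T.D r) < σ w' ∧ σ w' < σ r))

/-- The trace satisfies PRAM consistency (w.r.t. the distinguished process `p₀`):
there is a legal schedule of its visible operations respecting program order and
write-to order. -/
def PramTrace.PRAM (T : PramTrace ι) : Prop := ∃ σ : ι → ℕ, T.Legal σ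

/-- `E` contains the program-order edges and write-to edges, and is closed under
Rule C: for every triple `w = D(r)`, `r`, `w'` on the same variable with `w' ≠ w` and a
directed path from `w'` to `r`, the edge `w' → w` is in `E`. -/
def PramTrace.ClosedG (T : PramTrace ι) (E : ι → ι → Prop) : Prop :=
  (∀ a b, T.po a b → E a b) ∧
  (∀ r, T.isRead r = true → E (T.D r) r) ∧
  (∀ r w', T.isRead r = true → T.isRead w' = false → T.var w' = T.var r →
    w' ≠ T.D r → Relation.TransGen E w' r → E w' (T.D r))

/-- The closure of the operation graph: the least relation containing the
program-order and write-to edges and closed under Rule C. -/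
def PramTrace.closure (T : PramTrace ι) (a b : ι) : Prop :=
  ∀ E : ι → ι → Prop, T.ClosedG E → E a b

/-- A directed graph (relation) is acyclic if no vertex lies on a directed cycle. -/
def Acyclic {α : Type} (E : α → α → Prop) : Prop := ∀ a, ¬ Relation.TransGen E a a

/-- If a graph `E` contains the program-order and write-to edges, is closed under
Rule C, and is acyclic, then the trace satisfies PRAM consistency for the
distinguished process. -/
theorem stmt2 (T : PramTrace ι) (E : ι → ι → Prop)
    (hclosed : T.ClosedG E) (hacyc : Acyclic E) : T.PRAM := by
  classical
  -- "New" edges: from each read to every same-variable write that is not its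
  -- dictating write and has no E-path to the read.
  set New : ι → ι → Prop := fun r w =>
    T.isRead r = true ∧ T.isRead w = false ∧ T.var w = T.var r ∧ w ≠ T.D r ∧
      ¬ Relation.TransGen E w r with hNewDef
  set E₂ : ι → ι → Prop := fun a b => E a b ∨ New a b with hE2Def
  have hmono : ∀ {a b : ι}, Relation.TransGen E a b → Relation.TransGen E₂ a b := by
    intro a b h
    exact Relation.TransGen.mono (fun x y hxy => Or.inl hxy) _ _ h
  -- decomposition lemma: any E₂-path is a pure E-path, or has a last New edge
  have lemA : ∀ x y, Relation.TransGen E₂ x y →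
      Relation.TransGen E x y ∨ ∃ r w, New r w ∧ Relation.ReflTransGen E₂ x r ∧
        (w = y ∨ Relation.TransGen E w y) := by
    intro x y h
    induction h with
    | single h =>
      rcases h with h | h
      · exact Or.inl (Relation.TransGen.single h)
      · exact Or.inr ⟨x, _, h, Relation.ReflTransGen.refl, Or.inl rfl⟩
    | @tail b c hxb hbc ih =>
      rcases hbc with hbc | hbc
      · rcases ih with h | ⟨r, w, hN, hxr, hw⟩
        · exact Or.inl (h.tail hbc)
        · refine Or.inr ⟨r, w, hN, hxr, Or.inr ?_⟩
          rcases hw with rfl | hw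
          · exact Relation.TransGen.single hbc
          · exact hw.tail hbc
      · exact Or.inr ⟨b, c, hbc, hxb.to_reflTransGen, Or.inl rfl⟩
  -- E₂ is acyclic
  have hE2acyc : ∀ a, ¬ Relation.TransGen E₂ a a := by
    intro a ha
    set C : Set ι := {r | T.isRead r = true ∧ Relation.TransGen E₂ r r} with hCdef
    have hCne : C.Nonempty := by
      rcases lemA a a ha with h | ⟨r, w, hN, har, hw⟩
      · exact absurd h (hacyc a)
      · refine ⟨r, hN.1, ?_⟩
        have h1 : Relation.TransGen E₂ r a := by
          rcases hw with rfl | hw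
          · exact Relation.TransGen.single (Or.inr hN)
          · exact Relation.TransGen.head (Or.inr hN) (hmono hw)
        exact h1.trans_left har
    have hwf : WellFounded T.po := by
      haveI : IsTrans ι T.po := ⟨fun a b c h1 h2 => T.po_trans h1 h2⟩
      haveI : IsIrrefl ι T.po := ⟨T.po_irrefl⟩
      exact Finite.wellFounded_of_trans_of_irrefl _
    obtain ⟨r₀, hr₀C, hminC⟩ := hwf.has_min C hCne
    rcases lemA r₀ r₀ hr₀C.2 with h | ⟨r, w, hN, hr₀r, hw⟩
    · exact hacyc r₀ h
    · have hwr₀ : Relation.TransGen E w r₀ := by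
        rcases hw with rfl | hw
        · exact absurd hr₀C.1 (by simp [hN.2.1])
        · exact hw
      have hrC : r ∈ C := by
        refine ⟨hN.1, ?_⟩
        have h1 : Relation.TransGen E₂ r r₀ :=
          Relation.TransGen.head (Or.inr hN) (hmono hwr₀)
        exact h1.trans_left hr₀r
      by_cases hrr : r = r₀
      · subst hrr
        exact hN.2.2.2.2 hwr₀
      · have hproc : T.proc r = T.proc r₀ := by
          rw [T.reads_p0 r hN.1, T.reads_p0 r₀ hr₀C.1]
        rcases T.po_total r r₀ hproc hrr with hpo | hpo
        · exact hminC r hrC hpo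
        · exact hN.2.2.2.2 (hwr₀.tail (hclosed.1 r₀ r hpo))
  -- build the schedule from E₂
  set e : ι → ℕ := fun a => ((Fintype.equivFin ι) a : ℕ) with heDef
  set N := Fintype.card ι with hNdef
  have heN : ∀ a, e a < N := fun a => ((Fintype.equivFin ι) a).2
  set hgt : ι → ℕ := fun a =>
    (Finset.univ.filter (fun c => Relation.TransGen E₂ c a)).card with hhDef
  set σ : ι → ℕ := fun a => e a + N * hgt a with hσDef
  have hmod : ∀ a, σ a % N = e a := by
    intro a
    simp only [hσDef]
    rw [Nat.add_mul_mod_self_left, Nat.mod_eq_of_lt (heN a)]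
  have hlt : ∀ a b, E₂ a b → σ a < σ b := by
    intro a b hab
    have hsub : (Finset.univ.filter (fun c => Relation.TransGen E₂ c a)) ⊂
        (Finset.univ.filter (fun c => Relation.TransGen E₂ c b)) := by
      constructor
      · intro c hc
        simp only [Finset.mem_filter, Finset.mem_univ, true_and] at hc ⊢
        exact hc.tail hab
      · intro hcon
        have ha : a ∈ (Finset.univ.filter (fun c => Relation.TransGen E₂ c b)) := by
          simp only [Finset.mem_filter, Finset.mem_univ, true_and]
          exact Relation.TransGen.single hab
        have := hcon ha
        simp only [Finset.mem_filter, Finset.mem_univ, true_and] at this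
        exact hE2acyc a this
    have hcard : hgt a < hgt b := Finset.card_lt_card hsub
    have h1 : σ a < N + N * hgt a := by
      have := heN a
      simp only [hσDef]
      omega
    have h2 : N + N * hgt a ≤ N * hgt b := by
      calc N + N * hgt a = N * (hgt a + 1) := by ring
        _ ≤ N * hgt b := Nat.mul_le_mul_left N hcard
    have h3 : N * hgt b ≤ σ b := by simp only [hσDef]; omega
    omega
  refine ⟨σ, ?_, ?_, ?_, ?_⟩
  · intro a b hab
    have : e a = e b := by rw [← hmod a, ← hmod b, hab]
    exact (Fintype.equivFin ι).injective (Fin.ext this)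
  · intro a b hpo
    exact hlt a b (Or.inl (hclosed.1 a b hpo))
  · intro r hr
    exact hlt _ _ (Or.inl (hclosed.2.1 r hr))
  · intro r w' hr hw hvar hne ⟨h1, h2⟩
    by_cases hT : Relation.TransGen E w' r
    · have := hlt w' (T.D r) (Or.inl (hclosed.2.2 r w' hr hw hvar hne hT))
      omega
    · have := hlt r w' (Or.inr ⟨hr, hw, hvar, hne, hT⟩)
      omega
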